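/- Positivity of the mixture internal temperature Θ₂₁: assume 0 < (l₁/(l₁+l₂))·ε ≤ 1, Θ₁, Θ₂ ≥ 0, and the constraints ((m₁/m₂)ε−1)/(1+(m₁/m₂)ε) ≤ β ≤ 1, 0 ≤ γ̃ ≤ (m₁/l₁)(1−β)[(1+(m₁/m₂)ε)β + 1 − (m₁/m₂)ε], with η̄₁₂ = β·η̄₁ + (1−β)·η̄₂ and η̄₂₁ = η̄₂ − (m₁/m₂)ε(1−β)(η̄₂−η̄₁). Then Θ₂₁ := ε·(l₁/(l₁+l₂))·Θ₁ + (1 − ε·l₁/(l₁+l₂))·Θ₂ − (l₁/l₂)·ε·γ̃·|η̄₁−η̄₂|² − ε·(m₁/l₂)·(|η̄₁₂|² − |η̄₁|²) − (m₂/l₂)·(|η̄₂₁|² − |η̄₂|²) is nonnegative. -/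

import Mathlib

open Real

set_option maxHeartbeats 1000000

/-- Positivity of the mixture internal-energy temperature Θ₂₁ in the two-species
polyatomic BGK model. -/
theorem Theta21_nonneg (M l₁ l₂ : ℕ) (hl₁ : 1 ≤ l₁) (hl₂ : 1 ≤ l₂)
    (m₁ m₂ ε β γt Θ₁ Θ₂ : ℝ) (hm₁ : 0 < m₁) (hm₂ : 0 < m₂)
    (hε0 : 0 < (l₁ : ℝ) / ((l₁ : ℝ) + l₂) * ε) (hε1 : (l₁ : ℝ) / ((l₁ : ℝ) + l₂) * ε ≤ 1)
    (hΘ₁ : 0 ≤ Θ₁) (hΘ₂ : 0 ≤ Θ₂)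
    (hβl : (m₁ / m₂ * ε - 1) / (1 + m₁ / m₂ * ε) ≤ β) (hβu : β ≤ 1)
    (hγ0 : 0 ≤ γt)
    (hγu : γt ≤ m₁ / l₁ * (1 - β) * ((1 + m₁ / m₂ * ε) * β + 1 - m₁ / m₂ * ε))
    (η₁ η₂ η₁₂ η₂₁ : EuclideanSpace ℝ (Fin M))
    (hη₁₂ : η₁₂ = β • η₁ + (1 - β) • η₂)
    (hη₂₁ : η₂₁ = η₂ - (m₁ / m₂ * ε * (1 - β)) • (η₂ - η₁)) :
    0 ≤ ε * ((l₁ : ℝ) / ((l₁ : ℝ) + l₂)) * Θ₁ + (1 - ε * (l₁ : ℝ) / ((l₁ : ℝ) + l₂)) * Θ₂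
        - (l₁ : ℝ) / l₂ * ε * γt * ‖η₁ - η₂‖ ^ 2
        - ε * m₁ / l₂ * (‖η₁₂‖ ^ 2 - ‖η₁‖ ^ 2)
        - m₂ / l₂ * (‖η₂₁‖ ^ 2 - ‖η₂‖ ^ 2) := by
  have hl1 : (0:ℝ) < l₁ := by exact_mod_cast hl₁
  have hl2 : (0:ℝ) < l₂ := by exact_mod_cast hl₂
  have ha : (0:ℝ) < (l₁ : ℝ) / ((l₁ : ℝ) + l₂) := div_pos hl1 (by linarith)
  have hε : 0 < ε := by
    rcases lt_or_ge 0 ε with h | h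
    · exact h
    · exfalso
      have := mul_nonpos_of_nonneg_of_nonpos ha.le h
      linarith
  set P : ℝ := inner ℝ η₁ η₂ with hP
  have e1 : ‖η₁₂‖ ^ 2 = β ^ 2 * ‖η₁‖ ^ 2 + 2 * β * (1 - β) * P + (1 - β) ^ 2 * ‖η₂‖ ^ 2 := by
    rw [hη₁₂, ← real_inner_self_eq_norm_sq, ← real_inner_self_eq_norm_sq,
      ← real_inner_self_eq_norm_sq]
    simp only [inner_add_left, inner_add_right, real_inner_smul_left, real_inner_smul_right,
      hP]
    rw [real_inner_comm η₂ η₁]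
    ring
  have e2 : ‖η₂₁‖ ^ 2 = ‖η₂‖ ^ 2
      - 2 * (m₁ / m₂ * ε * (1 - β)) * (‖η₂‖ ^ 2 - P)
      + (m₁ / m₂ * ε * (1 - β)) ^ 2 * (‖η₁‖ ^ 2 - 2 * P + ‖η₂‖ ^ 2) := by
    rw [hη₂₁, ← real_inner_self_eq_norm_sq, ← real_inner_self_eq_norm_sq,
      ← real_inner_self_eq_norm_sq]
    simp only [inner_sub_left, inner_sub_right, real_inner_smul_left, real_inner_smul_right,
      hP]
    rw [real_inner_comm η₂ η₁]
    ring
  have e3 : ‖η₁ - η₂‖ ^ 2 = ‖η₁‖ ^ 2 - 2 * P + ‖η₂‖ ^ 2 := by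
    rw [← real_inner_self_eq_norm_sq, ← real_inner_self_eq_norm_sq,
      ← real_inner_self_eq_norm_sq]
    simp only [inner_sub_left, inner_sub_right, hP]
    rw [real_inner_comm η₂ η₁]
    ring
  have hK : (l₁:ℝ) * γt ≤ m₁ * (1 - β) * ((1 + m₁ / m₂ * ε) * β + 1 - m₁ / m₂ * ε) := by
    have h := mul_le_mul_of_nonneg_left hγu hl1.le
    have : (l₁:ℝ) * (m₁ / l₁ * (1 - β) * ((1 + m₁ / m₂ * ε) * β + 1 - m₁ / m₂ * ε))
        = m₁ * (1 - β) * ((1 + m₁ / m₂ * ε) * β + 1 - m₁ / m₂ * ε) := by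
      field_simp
    linarith [h, this.symm ▸ h]
  have key : ε * ((l₁ : ℝ) / ((l₁ : ℝ) + l₂)) * Θ₁ + (1 - ε * (l₁ : ℝ) / ((l₁ : ℝ) + l₂)) * Θ₂
        - (l₁ : ℝ) / l₂ * ε * γt * ‖η₁ - η₂‖ ^ 2
        - ε * m₁ / l₂ * (‖η₁₂‖ ^ 2 - ‖η₁‖ ^ 2)
        - m₂ / l₂ * (‖η₂₁‖ ^ 2 - ‖η₂‖ ^ 2)
      = ε * ((l₁ : ℝ) / ((l₁ : ℝ) + l₂)) * Θ₁ + (1 - ε * (l₁ : ℝ) / ((l₁ : ℝ) + l₂)) * Θ₂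
        + (1 / l₂) * (ε * (‖η₁‖ ^ 2 - 2 * P + ‖η₂‖ ^ 2)
            * (m₁ * (1 - β) * ((1 + m₁ / m₂ * ε) * β + 1 - m₁ / m₂ * ε) - (l₁:ℝ) * γt)) := by
    rw [e1, e2, e3]
    field_simp
    ring
  rw [key]
  have hD : 0 ≤ ‖η₁‖ ^ 2 - 2 * P + ‖η₂‖ ^ 2 := by rw [← e3]; positivity
  have h1 : 0 ≤ ε * ((l₁ : ℝ) / ((l₁ : ℝ) + l₂)) * Θ₁ :=
    mul_nonneg (mul_nonneg hε.le ha.le) hΘ₁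
  have h2 : 0 ≤ (1 - ε * (l₁ : ℝ) / ((l₁ : ℝ) + l₂)) * Θ₂ := by
    apply mul_nonneg _ hΘ₂
    have : ε * (l₁:ℝ) / ((l₁:ℝ) + l₂) = (l₁:ℝ) / ((l₁:ℝ) + l₂) * ε := by ring
    linarith
  have h3 : 0 ≤ (1 / l₂) * (ε * (‖η₁‖ ^ 2 - 2 * P + ‖η₂‖ ^ 2)
      * (m₁ * (1 - β) * ((1 + m₁ / m₂ * ε) * β + 1 - m₁ / m₂ * ε) - (l₁:ℝ) * γt)) := by
    apply mul_nonneg (by positivity)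
    exact mul_nonneg (mul_nonneg hε.le hD) (by linarith)
  linarith
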